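/- Let B : {0,1}^m → (subsets of K of size ≤ 1) be a (T, δ)-mystery bin function with keyspace K. For an integer c ≥ 1, define B_c : {0,1}^{cm} → (subsets of K of size ≤ 1) by partitioning the input y' into m consecutive blocks of c bits, letting z_i be the parity (sum mod 2) of the i-th block, and setting B_c(y') = B(z_1, ..., z_m). Then B_c is a (cT, δ)-mystery bin function with the same keyspace K. -/

import Mathlib

/-- A deterministic adaptive decision tree over inputs `x : Fin n → Bool`
with outputs in `β`. -/
inductive DTree (n : ℕ) (β : Type) : Type where
  | leaf : β → DTree n β
  | node : Fin n → DTree n β → DTree n β → DTree n β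

namespace DTree

/-- Evaluate a decision tree on an input. -/
def eval {n : ℕ} {β : Type} : DTree n β → (Fin n → Bool) → β
  | .leaf b, _ => b
  | .node i t0 t1, x => if x i then eval t1 x else eval t0 x

/-- Depth of a decision tree: the maximum number of queries on a root-to-leaf path. -/
def depth {n : ℕ} {β : Type} : DTree n β → ℕ
  | .leaf _ => 0
  | .node _ t0 t1 => 1 + max (depth t0) (depth t1)

end DTree

/-- `x` is consistent with a history of (queried index, answer) pairs. -/
def Consistent {n : ℕ} (x : Fin n → Bool) (h : List (Fin n × Bool)) : Prop :=
  ∀ p ∈ h, x p.1 = p.2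

/-- Run a query strategy (given as a decision tree) against an adversary strategy
`adv` (which fixes each queried bit as a function of the history so far), starting
from history `h`; returns the partial assignment produced by the run. -/
def runAdv {n : ℕ} {β : Type} (adv : List (Fin n × Bool) → Fin n → Bool) :
    DTree n β → List (Fin n × Bool) → List (Fin n × Bool)
  | .leaf _, h => h
  | .node i t0 t1, h =>
    if adv h i then runAdv adv t1 (h ++ [(i, true)])
    else runAdv adv t0 (h ++ [(i, false)])

/-- `secur(B, q) ≥ β`: there is an adversary strategy such that against any query
strategy making at most `q` queries, at least `β·|K|` keys `k` remain consistent
(with the bits fixed during the run) with the bin containing exactly `k`.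
A bin function maps `y ∈ {0,1}^m` to a subset of the keyspace `Fin M` of size at
most one, encoded as `Option (Fin M)`. -/
def HasSecurity {m M : ℕ} (B : (Fin m → Bool) → Option (Fin M)) (q : ℕ) (β : ℝ) :
    Prop :=
  ∃ adv : List (Fin m × Bool) → Fin m → Bool,
    ∀ T : DTree m Unit, T.depth ≤ q →
      ∃ H : Finset (Fin M), β * (M : ℝ) ≤ (H.card : ℝ) ∧
        ∀ k ∈ H, ∃ y : Fin m → Bool,
          Consistent y (runAdv adv T []) ∧ B y = some k

/-- `B` is a `(T, δ)`-mystery bin function: (i) some depth-`T` decision tree computes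
the bin contents `B(y)`; (ii) for each key `k`, some decision tree of depth `δT`
decides whether `k ∈ B(y)`; (iii) `secur(B, ⌊(1-δ)T⌋) ≥ 1 - δ`. -/
def IsMBF {m M : ℕ} (B : (Fin m → Bool) → Option (Fin M)) (T : ℕ) (δ : ℝ) : Prop :=
  (∃ tr : DTree m (Option (Fin M)), tr.depth ≤ T ∧ ∀ y, tr.eval y = B y) ∧
  (∀ k : Fin M, ∃ tr : DTree m Bool, (tr.depth : ℝ) ≤ δ * (T : ℝ) ∧
      ∀ y, tr.eval y = true ↔ B y = some k) ∧
  HasSecurity B ⌊(1 - δ) * (T : ℝ)⌋₊ (1 - δ)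

/-- The parity of the `i`-th block of `c` consecutive bits of `y : {0,1}^{cm}`
(block `i` consists of the positions `p` with `p / c = i`). -/
def blockParity (c m : ℕ) (y : Fin (c * m) → Bool) (i : Fin m) : Bool :=
  decide (Odd (Finset.univ.filter
    (fun p : Fin (c * m) => p.val / c = i.val ∧ y p = true)).card)
namespace MBFAux

open Finset

def blockIdx {c m : ℕ} (p : Fin (c * m)) : Fin m :=
  ⟨p.val / c, by
    rcases Nat.eq_zero_or_pos c with h | h
    · exact absurd p.2 (by simp [h])
    · exact (Nat.div_lt_iff_lt_mul h).2 (Nat.mul_comm c m ▸ p.2)⟩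

def blockList (c m : ℕ) (i : Fin m) : List (Fin (c * m)) :=
  (List.finRange c).map fun j =>
    ⟨i.val * c + j.val, by
      have h1 : i.val + 1 ≤ m := i.2
      have h2 : j.val < c := j.2
      have : (i.val + 1) * c ≤ m * c := Nat.mul_le_mul_right _ h1
      calc i.val * c + j.val < (i.val + 1) * c := by ring_nf; omega
        _ ≤ m * c := this
        _ = c * m := Nat.mul_comm _ _⟩

theorem mem_blockList {c m : ℕ} (hc : 0 < c) (i : Fin m) (p : Fin (c * m)) :
    p ∈ blockList c m i ↔ p.val / c = i.val := by
  simp only [blockList, List.mem_map, List.mem_finRange]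
  constructor
  · rintro ⟨j, -, rfl⟩
    simp only []
    rw [Nat.mul_comm i.val c, Nat.mul_add_div hc, Nat.div_eq_of_lt j.2, Nat.add_zero]
  · intro h
    refine ⟨⟨p.val % c, Nat.mod_lt _ hc⟩, trivial, ?_⟩
    apply Fin.ext
    simp only []
    rw [← h, Nat.mul_comm, Nat.div_add_mod]

theorem blockList_nodup (c m : ℕ) (i : Fin m) : (blockList c m i).Nodup := by
  apply List.Nodup.map _ (List.nodup_finRange c)
  intro j1 j2 h
  have : i.val * c + j1.val = i.val * c + j2.val := congrArg Fin.val h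
  exact Fin.ext (by omega)

theorem blockList_length (c m : ℕ) (i : Fin m) : (blockList c m i).length = c := by
  simp [blockList]

def listParity {n : ℕ} (x : Fin n → Bool) (l : List (Fin n)) : Bool :=
  l.foldr (fun p b => xor (x p) b) false

theorem listParity_eq {n : ℕ} (x : Fin n → Bool) (l : List (Fin n)) :
    listParity x l = decide (Odd ((l.filter (fun p => x p)).length)) := by
  induction l with
  | nil => simp [listParity]
  | cons p l ih =>
    simp only [listParity, List.foldr_cons] at *
    rw [ih]
    cases hx : x p <;> simp [List.filter_cons, hx, Nat.odd_add_one, ← Nat.not_even_iff_odd, decide_not]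

theorem blockParity_eq {c m : ℕ} (hc : 0 < c) (x : Fin (c * m) → Bool) (i : Fin m) :
    blockParity c m x i = listParity x (blockList c m i) := by
  rw [listParity_eq, blockParity]
  congr 1
  congr 1
  have hnd : ((blockList c m i).filter (fun p => x p)).Nodup :=
    (blockList_nodup c m i).filter _
  rw [← List.toFinset_card_of_nodup hnd]
  congr 1
  ext p
  simp only [List.mem_toFinset, List.mem_filter, mem_blockList hc, Finset.mem_filter,
    Finset.mem_univ, true_and]

end MBFAux
namespace MBFAux

def parityChain {n : ℕ} {β : Type} : List (Fin n) → DTree n β → DTree n β → DTree n β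
  | [], t0, _ => t0
  | j :: l, t0, t1 => .node j (parityChain l t0 t1) (parityChain l t1 t0)

theorem parityChain_eval {n : ℕ} {β : Type} (x : Fin n → Bool) :
    ∀ (l : List (Fin n)) (t0 t1 : DTree n β),
      (parityChain l t0 t1).eval x = if listParity x l then t1.eval x else t0.eval x := by
  intro l
  induction l with
  | nil => intro t0 t1; simp [parityChain, listParity]
  | cons j l ih =>
    intro t0 t1
    simp only [parityChain, DTree.eval, ih]
    have : listParity x (j :: l) = xor (x j) (listParity x l) := rfl
    rw [this]
    cases hx : x j <;> cases hp : listParity x l <;> simp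

theorem parityChain_depth {n : ℕ} {β : Type} :
    ∀ (l : List (Fin n)) (t0 t1 : DTree n β),
      (parityChain l t0 t1).depth ≤ l.length + max t0.depth t1.depth := by
  intro l
  induction l with
  | nil => intro t0 t1; simp [parityChain]
  | cons j l ih =>
    intro t0 t1
    simp only [parityChain, DTree.depth, List.length_cons]
    have h1 := ih t0 t1
    have h2 := ih t1 t0
    omega

def expand (c m : ℕ) {β : Type} : DTree m β → DTree (c * m) β
  | .leaf b => .leaf b
  | .node i t0 t1 => parityChain (blockList c m i) (expand c m t0) (expand c m t1)

theorem expand_eval {c m : ℕ} {β : Type} (hc : 0 < c) (t : DTree m β) (x : Fin (c * m) → Bool) :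
    (expand c m t).eval x = t.eval (blockParity c m x) := by
  induction t with
  | leaf b => rfl
  | node i t0 t1 ih0 ih1 =>
    simp only [expand, parityChain_eval, DTree.eval, ih0, ih1, ← blockParity_eq hc]

theorem expand_depth {c m : ℕ} {β : Type} (t : DTree m β) :
    (expand c m t).depth ≤ c * t.depth := by
  induction t with
  | leaf b => simp [expand, DTree.depth]
  | node i t0 t1 ih0 ih1 =>
    simp only [expand, DTree.depth]
    have h := parityChain_depth (blockList c m i) (expand c m t0) (expand c m t1)
    rw [blockList_length] at h
    have : max (expand c m t0).depth (expand c m t1).depth ≤ c * max t0.depth t1.depth := by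
      have := Nat.mul_le_mul_left c (Nat.le_max_left t0.depth t1.depth)
      have := Nat.mul_le_mul_left c (Nat.le_max_right t0.depth t1.depth)
      omega
    calc (parityChain (blockList c m i) (expand c m t0) (expand c m t1)).depth
        ≤ c + max (expand c m t0).depth (expand c m t1).depth := h
      _ ≤ c + c * max t0.depth t1.depth := by omega
      _ = c * (1 + max t0.depth t1.depth) := by ring
end MBFAux
namespace MBFAux

variable {c m : ℕ}

/-- distinct queried indices in a history -/
def queriedS (h : List (Fin (c * m) × Bool)) : Finset (Fin (c * m)) :=
  (h.map Prod.fst).toFinset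

def blockCount (h : List (Fin (c * m) × Bool)) (i : Fin m) : ℕ :=
  ((queriedS h).filter fun p => blockIdx p = i).card

def completes (h : List (Fin (c * m) × Bool)) (p : Fin (c * m)) : Prop :=
  p ∉ h.map Prod.fst ∧ blockCount h (blockIdx p) + 1 = c

instance (h : List (Fin (c * m) × Bool)) (p : Fin (c * m)) : Decidable (completes h p) :=
  by unfold completes; infer_instance

/-- simulated inner history: blocks in order of completion -/
def simA (adv : List (Fin m × Bool) → Fin m → Bool) :
    List (Fin m × Bool) → List (Fin (c * m) × Bool) → List (Fin (c * m) × Bool) →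
      List (Fin m × Bool)
  | acc, _, [] => acc
  | acc, pre, x :: rest =>
    if completes pre x.1 then
      simA adv (acc ++ [(blockIdx x.1, adv acc (blockIdx x.1))]) (pre ++ [x]) rest
    else simA adv acc (pre ++ [x]) rest

def simH (adv : List (Fin m × Bool) → Fin m → Bool) (h : List (Fin (c * m) × Bool)) :
    List (Fin m × Bool) :=
  simA adv [] [] h

/-- the outer adversary -/
def advC (adv : List (Fin m × Bool) → Fin m → Bool)
    (h : List (Fin (c * m) × Bool)) (p : Fin (c * m)) : Bool :=
  if p ∈ h.map Prod.fst then decide ((p, true) ∈ h)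
  else if blockCount h (blockIdx p) + 1 = c then adv (simH adv h) (blockIdx p)
  else false

def pathTree {n : ℕ} : List (Fin n) → DTree n Unit
  | [] => .leaf ()
  | i :: l => .node i (pathTree l) (pathTree l)

theorem pathTree_depth {n : ℕ} (l : List (Fin n)) : (pathTree l).depth = l.length := by
  induction l with
  | nil => rfl
  | cons i l ih => simp [pathTree, DTree.depth, ih, Nat.add_comm]

theorem runAdv_pathTree_snoc {n : ℕ} (adv : List (Fin n × Bool) → Fin n → Bool)
    (l : List (Fin n)) (i : Fin n) (h : List (Fin n × Bool)) :
    runAdv adv (pathTree (l ++ [i])) h =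
      runAdv adv (pathTree l) h ++ [(i, adv (runAdv adv (pathTree l) h) i)] := by
  induction l generalizing h with
  | nil =>
    simp only [List.nil_append, pathTree, runAdv]
    cases hb : adv h i <;> simp [runAdv, hb]
  | cons j l ih =>
    simp only [List.cons_append, pathTree, runAdv]
    cases hb : adv h j <;> simp [ih]

theorem simA_append (adv : List (Fin m × Bool) → Fin m → Bool)
    (l1 : List (Fin (c * m) × Bool)) :
    ∀ acc pre l2, simA adv acc pre (l1 ++ l2) = simA adv (simA adv acc pre l1) (pre ++ l1) l2 := by
  induction l1 with
  | nil => intro acc pre l2; simp [simA]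
  | cons x l1 ih =>
    intro acc pre l2
    simp only [List.cons_append, simA]
    by_cases hcp : completes pre x.1 <;>
      simp [hcp, ih, List.append_assoc]

theorem simH_snoc (adv : List (Fin m × Bool) → Fin m → Bool)
    (h : List (Fin (c * m) × Bool)) (x : Fin (c * m) × Bool) :
    simH adv (h ++ [x]) =
      if completes h x.1 then
        simH adv h ++ [(blockIdx x.1, adv (simH adv h) (blockIdx x.1))]
      else simH adv h := by
  unfold simH
  rw [simA_append adv h [] []]
  simp only [List.nil_append]
  by_cases hcp : completes h x.1 <;> simp [simA, hcp]

def recordedTrue (h : List (Fin (c * m) × Bool)) (i : Fin m) : Finset (Fin (c * m)) :=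
  Finset.univ.filter fun p => blockIdx p = i ∧ (p, true) ∈ h

def blockF (c m : ℕ) (i : Fin m) : Finset (Fin (c * m)) :=
  Finset.univ.filter fun p => blockIdx p = i

theorem blockF_card (hc : 0 < c) (i : Fin m) : (blockF c m i).card = c := by
  have h1 : (blockList c m i).toFinset = blockF c m i := by
    ext p
    simp [List.mem_toFinset, mem_blockList hc, blockF, blockIdx, Fin.ext_iff]
  rw [← h1, List.toFinset_card_of_nodup (blockList_nodup c m i), blockList_length]

theorem blockCount_le (hc : 0 < c) (h : List (Fin (c * m) × Bool)) (i : Fin m) :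
    blockCount h i ≤ c := by
  calc blockCount h i ≤ (blockF c m i).card := by
        apply Finset.card_le_card
        intro p hp
        simp only [blockCount, Finset.mem_filter, blockF, Finset.mem_univ, true_and] at *
        exact hp.2
    _ = c := blockF_card hc i

theorem queriedS_snoc (h : List (Fin (c * m) × Bool)) (x : Fin (c * m) × Bool) :
    queriedS (h ++ [x]) = insert x.1 (queriedS h) := by
  ext q; simp [queriedS, or_comm]

theorem blockCount_snoc_fresh (h : List (Fin (c * m) × Bool)) (x : Fin (c * m) × Bool)
    (hf : x.1 ∉ h.map Prod.fst) :
    blockCount (h ++ [x]) (blockIdx x.1) = blockCount h (blockIdx x.1) + 1 := by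
  rw [blockCount, queriedS_snoc, Finset.filter_insert]
  rw [if_pos rfl, Finset.card_insert_of_notMem]
  · rfl
  · simp only [Finset.mem_filter, queriedS, List.mem_toFinset]
    exact fun hx => hf hx.1

theorem blockCount_snoc_ne (h : List (Fin (c * m) × Bool)) (x : Fin (c * m) × Bool)
    (i : Fin m) (hi : blockIdx x.1 ≠ i) :
    blockCount (h ++ [x]) i = blockCount h i := by
  rw [blockCount, queriedS_snoc, Finset.filter_insert, if_neg hi]; rfl

theorem blockCount_snoc_mem (h : List (Fin (c * m) × Bool)) (x : Fin (c * m) × Bool)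
    (hf : x.1 ∈ h.map Prod.fst) (i : Fin m) :
    blockCount (h ++ [x]) i = blockCount h i := by
  rw [blockCount, queriedS_snoc, Finset.insert_eq_self.2 (by simp [queriedS, hf])]; rfl

end MBFAux
namespace MBFAux

variable {c m : ℕ}

theorem blockCount_snoc_le (h : List (Fin (c * m) × Bool)) (x : Fin (c * m) × Bool)
    (i : Fin m) : blockCount h i ≤ blockCount (h ++ [x]) i := by
  apply Finset.card_le_card
  intro q hq
  simp only [Finset.mem_filter, queriedS, List.mem_toFinset, List.map_append] at *
  exact ⟨by simp [hq.1], hq.2⟩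

structure Inv (adv : List (Fin m × Bool) → Fin m → Bool)
    (h : List (Fin (c * m) × Bool)) : Prop where
  fn : ∀ p b b', (p, b) ∈ h → (p, b') ∈ h → b = b'
  full : ∀ i, blockCount h i = c → ∃ v, (i, v) ∈ simH adv h
  simCompl : ∀ i v, (i, v) ∈ simH adv h → blockCount h i = c
  nodup : ((simH adv h).map Prod.fst).Nodup
  falseAns : ∀ p b, (p, b) ∈ h → blockCount h (blockIdx p) < c → b = false
  par : ∀ i v, (i, v) ∈ simH adv h →
    (recordedTrue h i).card = if v then 1 else 0
  run : simH adv h = runAdv adv (pathTree ((simH adv h).map Prod.fst)) []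

theorem Inv_nil (hc : 0 < c) (adv : List (Fin m × Bool) → Fin m → Bool) :
    Inv adv ([] : List (Fin (c * m) × Bool)) := by
  have hs : simH adv ([] : List (Fin (c * m) × Bool)) = [] := rfl
  refine ⟨?_, ?_, ?_, ?_, ?_, ?_, ?_⟩
  · intro p b b' hb; simp at hb
  · intro i hi
    exfalso
    have : blockCount ([] : List (Fin (c * m) × Bool)) i = 0 := by
      simp [blockCount, queriedS]
    omega
  · intro i v hv; rw [hs] at hv; simp at hv
  · rw [hs]; simp
  · intro p b hb; simp at hb
  · intro i v hv; rw [hs] at hv; simp at hv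
  · rw [hs]; rfl

theorem Inv_step (hc : 0 < c) (adv : List (Fin m × Bool) → Fin m → Bool)
    (h : List (Fin (c * m) × Bool)) (hI : Inv adv h) (p : Fin (c * m)) :
    Inv adv (h ++ [(p, advC adv h p)]) := by
  set b0 := advC adv h p with hb0
  have hmem : ∀ q (b : Bool), (q, b) ∈ h ++ [(p, b0)] ↔ (q, b) ∈ h ∨ (q = p ∧ b = b0) := by
    intro q b; simp [Prod.ext_iff]
  by_cases hq : p ∈ h.map Prod.fst
  · -- Case A : repeated query
    have hbv : b0 = decide ((p, true) ∈ h) := by rw [hb0, advC, if_pos hq]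
    have hnc : ¬ completes h p := fun hcp => hcp.1 hq
    have hsim : simH adv (h ++ [(p, b0)]) = simH adv h := by
      rw [simH_snoc, if_neg hnc]
    have hcnt : ∀ i, blockCount (h ++ [(p, b0)]) i = blockCount h i :=
      fun i => blockCount_snoc_mem h _ hq i
    have hb0h : (p, b0) ∈ h := by
      rcases List.mem_map.1 hq with ⟨⟨q, b⟩, hqb, hfst⟩
      simp only at hfst; subst hfst
      have hbb : b0 = b := by
        rw [hbv]
        cases b
        · exact decide_eq_false
            (fun htr => absurd (hI.fn _ true false htr hqb) (by simp))
        · exact decide_eq_true hqb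
      rw [hbb]; exact hqb
    have hrt : ∀ i, recordedTrue (h ++ [(p, b0)]) i = recordedTrue h i := by
      intro i
      ext q
      simp only [recordedTrue, Finset.mem_filter, Finset.mem_univ, true_and, hmem]
      constructor
      · rintro ⟨hbi, hin | ⟨rfl, hb⟩⟩
        · exact ⟨hbi, hin⟩
        · exact ⟨hbi, hb ▸ hb0h⟩
      · rintro ⟨hbi, hin⟩; exact ⟨hbi, Or.inl hin⟩
    refine ⟨?_, ?_, ?_, ?_, ?_, ?_, ?_⟩
    · intro q b b' hb hb'
      rw [hmem] at hb hb'
      rcases hb with hb | ⟨rfl, rfl⟩ <;> rcases hb' with hb' | hb'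
      · exact hI.fn q b b' hb hb'
      · exact hb'.2 ▸ hI.fn q b b0 hb (hb'.1 ▸ hb0h)
      · exact hI.fn q b0 b' hb0h hb'
      · exact hb'.2.symm
    · intro i hi; rw [hsim]; exact hI.full i (by rw [← hcnt i]; exact hi)
    · intro i v hv; rw [hcnt]; exact hI.simCompl i v (hsim ▸ hv)
    · rw [hsim]; exact hI.nodup
    · intro q b hb hlt
      rw [hmem] at hb
      rcases hb with hb | ⟨rfl, rfl⟩
      · exact hI.falseAns q b hb (by rw [← hcnt]; exact hlt)
      · exact hI.falseAns q b0 hb0h (by rw [← hcnt]; exact hlt)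
    · intro i v hv; rw [hrt]; exact hI.par i v (hsim ▸ hv)
    · rw [hsim]; exact hI.run
  · -- p is fresh
    have hcnt_eq : blockCount (h ++ [(p, b0)]) (blockIdx p) = blockCount h (blockIdx p) + 1 :=
      blockCount_snoc_fresh h (p, b0) hq
    have hcnt_ne : ∀ i, blockIdx p ≠ i → blockCount (h ++ [(p, b0)]) i = blockCount h i :=
      fun i hi => blockCount_snoc_ne h (p, b0) i hi
    have hfn : ∀ q (b b' : Bool), (q, b) ∈ h ++ [(p, b0)] → (q, b') ∈ h ++ [(p, b0)] → b = b' := by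
      intro q b b' hb hb'
      rw [hmem] at hb hb'
      rcases hb with hb | ⟨rfl, rfl⟩ <;> rcases hb' with hb' | hb'
      · exact hI.fn q b b' hb hb'
      · exact absurd (List.mem_map.2 ⟨(q, b), hb, rfl⟩) (hb'.1 ▸ hq)
      · exact absurd (List.mem_map.2 ⟨(q, b'), hb', rfl⟩) hq
      · exact hb'.2.symm
    by_cases hcc : blockCount h (blockIdx p) + 1 = c
    · -- Case C : completing query
      have hcp : completes h p := ⟨hq, hcc⟩
      set v0 := adv (simH adv h) (blockIdx p) with hv0
      have hbv : b0 = v0 := by rw [hb0, advC, if_neg hq, if_pos hcc]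
      have hsim : simH adv (h ++ [(p, b0)]) = simH adv h ++ [(blockIdx p, v0)] := by
        rw [simH_snoc, if_pos hcp]
      have hnotin : ∀ v, (blockIdx p, v) ∉ simH adv h := by
        intro v hv
        have := hI.simCompl _ v hv
        omega
      refine ⟨hfn, ?_, ?_, ?_, ?_, ?_, ?_⟩
      · intro i hi
        by_cases hip : blockIdx p = i
        · exact ⟨v0, by rw [hsim, hip]; simp⟩
        · rcases hI.full i (by rw [← hcnt_ne i hip]; exact hi) with ⟨v, hv⟩
          exact ⟨v, by rw [hsim]; exact List.mem_append_left _ hv⟩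
      · intro i v hv
        rw [hsim, List.mem_append, List.mem_singleton] at hv
        rcases hv with hv | hv
        · have hic : blockCount h i = c := hI.simCompl i v hv
          have hip : blockIdx p ≠ i := by
            rintro rfl; omega
          rw [hcnt_ne i hip]; exact hic
        · have : i = blockIdx p := congrArg Prod.fst hv
          subst this; rw [hcnt_eq, hcc]
      · rw [hsim, List.map_append]
        simp only [List.map_cons, List.map_nil]
        rw [List.nodup_append]
        refine ⟨hI.nodup, List.nodup_singleton _, ?_⟩
        intro i hi j hj hij
        simp only [List.mem_singleton] at hj
        subst hj; subst hij
        rcases List.mem_map.1 hi with ⟨⟨i', v⟩, hv, hfst⟩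
        simp only at hfst; subst hfst
        exact hnotin v hv
      · intro q b hb hlt
        rw [hmem] at hb
        rcases hb with hb | ⟨rfl, rfl⟩
        · by_cases hip : blockIdx p = blockIdx q
          · rw [← hip, hcnt_eq] at hlt
            exact hI.falseAns q b hb (by rw [← hip] at *; omega)
          · exact hI.falseAns q b hb (by rw [← hcnt_ne _ hip]; exact hlt)
        · rw [hcnt_eq, hcc] at hlt; omega
      · intro i v hv
        rw [hsim, List.mem_append, List.mem_singleton] at hv
        rcases hv with hv | hv
        · have hip : blockIdx p ≠ i := by
            intro hip
            exact hnotin v (hip ▸ hv)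
          have : recordedTrue (h ++ [(p, b0)]) i = recordedTrue h i := by
            ext q
            simp only [recordedTrue, Finset.mem_filter, Finset.mem_univ, true_and, hmem]
            constructor
            · rintro ⟨hbi, hin | ⟨rfl, hb⟩⟩
              · exact ⟨hbi, hin⟩
              · exact absurd hbi hip
            · rintro ⟨hbi, hin⟩; exact ⟨hbi, Or.inl hin⟩
          rw [this]; exact hI.par i v hv
        · have hieq : i = blockIdx p := congrArg Prod.fst hv
          have hveq : v = v0 := congrArg Prod.snd hv
          subst hieq; subst hveq
          have hold : ∀ q, blockIdx q = blockIdx p → (q, true) ∉ h := by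
            intro q hbi hin
            have := hI.falseAns q true hin (by rw [hbi]; omega)
            simp at this
          have hset : recordedTrue (h ++ [(p, b0)]) (blockIdx p)
              = if v0 then {p} else ∅ := by
            ext q
            simp only [recordedTrue, Finset.mem_filter, Finset.mem_univ, true_and, hmem]
            constructor
            · rintro ⟨hbi, hin | ⟨rfl, hb⟩⟩
              · exact absurd hin (hold q hbi)
              · rw [← hbv, ← hb]; simp
            · intro hqin
              cases hvv : v0
              · rw [hvv] at hqin; simp at hqin
              · rw [hvv] at hqin
                simp only [if_pos, Finset.mem_singleton] at hqin
                subst hqin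
                exact ⟨rfl, Or.inr ⟨rfl, by rw [hbv, hvv]⟩⟩
          rw [hset]
          cases v0 <;> simp
      · rw [hsim, List.map_append]
        simp only [List.map_cons, List.map_nil]
        rw [runAdv_pathTree_snoc, ← hI.run]
      -- end case C
    · -- Case B : fresh, non-completing
      have hbv : b0 = false := by rw [hb0, advC, if_neg hq, if_neg hcc]
      have hnc : ¬ completes h p := fun hcp => hcc hcp.2
      have hsim : simH adv (h ++ [(p, b0)]) = simH adv h := by
        rw [simH_snoc, if_neg hnc]
      have hle : blockCount (h ++ [(p, b0)]) (blockIdx p) ≤ c :=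
        blockCount_le hc _ _
      refine ⟨hfn, ?_, ?_, ?_, ?_, ?_, ?_⟩
      · intro i hi
        rw [hsim]
        by_cases hip : blockIdx p = i
        · exfalso; rw [← hip] at hi; omega
        · exact hI.full i (by rw [← hcnt_ne i hip]; exact hi)
      · intro i v hv
        rw [hsim] at hv
        have hic := hI.simCompl i v hv
        by_cases hip : blockIdx p = i
        · exfalso; rw [← hip] at hic; omega
        · rw [hcnt_ne i hip]; exact hic
      · rw [hsim]; exact hI.nodup
      · intro q b hb hlt
        rw [hmem] at hb
        rcases hb with hb | ⟨rfl, rfl⟩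
        · by_cases hip : blockIdx p = blockIdx q
          · rw [← hip, hcnt_eq] at hlt
            exact hI.falseAns q b hb (by rw [← hip] at *; omega)
          · exact hI.falseAns q b hb (by rw [← hcnt_ne _ hip]; exact hlt)
        · exact hbv
      · intro i v hv
        rw [hsim] at hv
        have : recordedTrue (h ++ [(p, b0)]) i = recordedTrue h i := by
          ext q
          simp only [recordedTrue, Finset.mem_filter, Finset.mem_univ, true_and, hmem]
          constructor
          · rintro ⟨hbi, hin | ⟨rfl, hb⟩⟩
            · exact ⟨hbi, hin⟩
            · rw [hbv] at hb; simp at hb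
          · rintro ⟨hbi, hin⟩; exact ⟨hbi, Or.inl hin⟩
        rw [this]; exact hI.par i v hv
      · rw [hsim]; exact hI.run

end MBFAux
namespace MBFAux

variable {c m : ℕ}

theorem Inv_runAdv (hc : 0 < c) (adv : List (Fin m × Bool) → Fin m → Bool)
    (t : DTree (c * m) Unit) (h : List (Fin (c * m) × Bool)) (hI : Inv adv h) :
    Inv adv (runAdv (advC adv) t h) := by
  induction t generalizing h with
  | leaf b => exact hI
  | node i t0 t1 ih0 ih1 =>
    simp only [runAdv]
    by_cases hb : advC adv h i
    · rw [if_pos hb]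
      have := Inv_step hc adv h hI i
      rw [hb] at this
      exact ih1 _ this
    · rw [if_neg hb]
      have := Inv_step hc adv h hI i
      rw [Bool.not_eq_true] at hb
      rw [hb] at this
      exact ih0 _ this

theorem runAdv_length {n : ℕ} {β : Type} (adv : List (Fin n × Bool) → Fin n → Bool)
    (t : DTree n β) (h : List (Fin n × Bool)) :
    (runAdv adv t h).length ≤ h.length + t.depth := by
  induction t generalizing h with
  | leaf b => simp [runAdv, DTree.depth]
  | node i t0 t1 ih0 ih1 =>
    simp only [runAdv, DTree.depth]
    by_cases hb : adv h i
    · rw [if_pos hb]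
      have := ih1 (h ++ [(i, true)])
      simp only [List.length_append, List.length_singleton] at this
      omega
    · rw [if_neg hb]
      have := ih0 (h ++ [(i, false)])
      simp only [List.length_append, List.length_singleton] at this
      omega

theorem sim_count (hc : 0 < c) (adv : List (Fin m × Bool) → Fin m → Bool)
    (h : List (Fin (c * m) × Bool)) (hI : Inv adv h) :
    c * (simH adv h).length ≤ h.length := by
  set S : Finset (Fin m) := ((simH adv h).map Prod.fst).toFinset with hS
  have hcard : S.card = (simH adv h).length := by
    rw [hS, List.toFinset_card_of_nodup hI.nodup, List.length_map]
  have hfullS : ∀ i ∈ S, blockCount h i = c := by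
    intro i hi
    rw [hS, List.mem_toFinset] at hi
    rcases List.mem_map.1 hi with ⟨⟨i', v⟩, hv, hfst⟩
    simp only at hfst; subst hfst
    exact hI.simCompl _ v hv
  calc c * (simH adv h).length = ∑ i ∈ S, blockCount h i := by
        rw [Finset.sum_congr rfl hfullS, Finset.sum_const, smul_eq_mul, hcard, Nat.mul_comm]
    _ = (S.biUnion fun i => (queriedS h).filter fun p => blockIdx p = i).card := by
        rw [Finset.card_biUnion]
        · exact Finset.sum_congr rfl (fun i _ => rfl)
        intro i hi j hj hij
        simp only [Finset.disjoint_left, Finset.mem_filter]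
        rintro q ⟨-, hqi⟩ ⟨-, hqj⟩
        exact hij (hqi ▸ hqj ▸ rfl)
    _ ≤ (queriedS h).card := by
        apply Finset.card_le_card
        intro q hq
        rcases Finset.mem_biUnion.1 hq with ⟨i, -, hqi⟩
        exact (Finset.mem_filter.1 hqi).1
    _ ≤ (h.map Prod.fst).length := List.toFinset_card_le _
    _ = h.length := List.length_map _

end MBFAux
namespace MBFAux

open Classical in
theorem lift_exists {c m : ℕ} (hc : 0 < c) (adv : List (Fin m × Bool) → Fin m → Bool)
    (h' : List (Fin (c * m) × Bool)) (hI : Inv adv h') (y : Fin m → Bool)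
    (hy : Consistent y (simH adv h')) :
    ∃ y' : Fin (c * m) → Bool, Consistent y' h' ∧ blockParity c m y' = y := by
  classical
  set y' : Fin (c * m) → Bool := fun p =>
    if (p, true) ∈ h' then true
    else if p ∈ queriedS h' then false
    else decide (y (blockIdx p) = true ∧
      ∀ r, blockIdx r = blockIdx p → r ∉ queriedS h' → p ≤ r) with hy'
  have hmemq : ∀ p : Fin (c * m), ∀ b, (p, b) ∈ h' → p ∈ queriedS h' := by
    intro p b hb
    simp only [queriedS, List.mem_toFinset]
    exact List.mem_map.2 ⟨(p, b), hb, rfl⟩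
  have hy1 : ∀ p, (p, true) ∈ h' → y' p = true := by
    intro p hp; simp only [hy', if_pos hp]
  have hy2 : ∀ p, (p, true) ∉ h' → p ∈ queriedS h' → y' p = false := by
    intro p hp hq; simp only [hy', if_neg hp, if_pos hq]
  have hy3 : ∀ p, p ∉ queriedS h' → y' p = decide (y (blockIdx p) = true ∧
      ∀ r, blockIdx r = blockIdx p → r ∉ queriedS h' → p ≤ r) := by
    intro p hq
    have h1 : (p, true) ∉ h' := fun hp => hq (hmemq p true hp)
    simp only [hy', if_neg h1, if_neg hq]
  refine ⟨y', ?_, ?_⟩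
  · -- Consistent
    rintro ⟨p, b⟩ hp
    cases b
    · have h1 : (p, true) ∉ h' := by
        intro htr
        exact absurd (hI.fn p true false htr hp) (by simp)
      exact hy2 p h1 (hmemq p false hp)
    · exact hy1 p hp
  · -- blockParity y' = y
    funext i
    have hval : ∀ p : Fin (c * m), (p.val / c = i.val) = (blockIdx p = i) := by
      intro p
      simp [blockIdx, Fin.ext_iff]
    rw [blockParity]
    by_cases hful : blockCount h' i = c
    · -- complete block
      obtain ⟨v, hv⟩ := hI.full i hful
      have hyv : y i = v := hy (i, v) hv
      have hqall : ∀ p : Fin (c * m), blockIdx p = i → p ∈ queriedS h' := by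
        intro p hp
        have hsub : (queriedS h').filter (fun q => blockIdx q = i) ⊆ blockF c m i := by
          intro q hq
          simp only [Finset.mem_filter, blockF, Finset.mem_univ, true_and] at *
          exact hq.2
        have heq : (queriedS h').filter (fun q => blockIdx q = i) = blockF c m i :=
          Finset.eq_of_subset_of_card_le hsub (by rw [blockF_card hc]; exact le_of_eq hful.symm)
        have : p ∈ blockF c m i := by simp [blockF, hp]
        rw [← heq] at this
        exact (Finset.mem_filter.1 this).1
      have hset : Finset.univ.filter (fun p : Fin (c * m) => p.val / c = i.val ∧ y' p = true)
          = recordedTrue h' i := by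
        ext p
        simp only [Finset.mem_filter, Finset.mem_univ, true_and, recordedTrue, hval]
        constructor
        · rintro ⟨hbi, hyp⟩
          refine ⟨hbi, ?_⟩
          by_contra htr
          rw [hy2 p htr (hqall p hbi)] at hyp
          simp at hyp
        · rintro ⟨hbi, htr⟩
          exact ⟨hbi, hy1 p htr⟩
      rw [hset, hI.par i v hv, hyv]
      cases v <;> simp
    · -- incomplete block
      have hlt : blockCount h' i < c := lt_of_le_of_ne (blockCount_le hc h' i) hful
      set U : Finset (Fin (c * m)) :=
        Finset.univ.filter (fun p => blockIdx p = i ∧ p ∉ queriedS h') with hU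
      have hUne : U.Nonempty := by
        by_contra hne
        rw [Finset.not_nonempty_iff_eq_empty] at hne
        have hsub : blockF c m i ⊆ (queriedS h').filter (fun q => blockIdx q = i) := by
          intro p hp
          simp only [blockF, Finset.mem_filter, Finset.mem_univ, true_and] at hp
          have hpin : p ∈ queriedS h' := by
            by_contra hq
            have : p ∈ U := by simp [hU, hp, hq]
            rw [hne] at this
            simp at this
          simp [hpin, hp]
        have := Finset.card_le_card hsub
        rw [blockF_card hc] at this
        have hbc : ((queriedS h').filter fun q => blockIdx q = i).card = blockCount h' i := rfl
        omega
      set u0 := U.min' hUne with hu0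
      have hu0U : u0 ∈ U := U.min'_mem hUne
      have hu0b : blockIdx u0 = i ∧ u0 ∉ queriedS h' := by
        have := hu0U
        simp only [hU, Finset.mem_filter, Finset.mem_univ, true_and] at this
        exact this
      have hnotr : ∀ p : Fin (c * m), blockIdx p = i → (p, true) ∉ h' := by
        intro p hp htr
        have := hI.falseAns p true htr (by rw [hp]; exact hlt)
        simp at this
      have hset : Finset.univ.filter (fun p : Fin (c * m) => p.val / c = i.val ∧ y' p = true)
          = if y i = true then {u0} else ∅ := by
        ext p
        simp only [Finset.mem_filter, Finset.mem_univ, true_and, hval]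
        constructor
        · rintro ⟨hbi, hyp⟩
          by_cases hpq : p ∈ queriedS h'
          · rw [hy2 p (hnotr p hbi) hpq] at hyp; simp at hyp
          · rw [hy3 p hpq, decide_eq_true_eq] at hyp
            obtain ⟨hyi, hleast⟩ := hyp
            rw [hbi] at hyi
            have hpU : p ∈ U := by simp [hU, hbi, hpq]
            have h1 : p ≤ u0 := hleast u0 (by rw [hbi]; exact hu0b.1) hu0b.2
            have h2 : u0 ≤ p := U.min'_le p hpU
            have : p = u0 := le_antisymm h1 h2
            rw [if_pos hyi, this]
            simp
        · intro hp
          by_cases hyi : y i = true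
          · rw [if_pos hyi, Finset.mem_singleton] at hp
            constructor
            · rw [hp]; exact hu0b.1
            · rw [hp, hy3 u0 hu0b.2, decide_eq_true_eq]
              refine ⟨by rw [hu0b.1]; exact hyi, ?_⟩
              intro r hr hrq
              apply U.min'_le
              simp only [hU, Finset.mem_filter, Finset.mem_univ, true_and]
              exact ⟨by rw [← hu0b.1]; exact hr, hrq⟩
          · rw [if_neg hyi] at hp
            simp at hp
      rw [hset]
      cases hyi : y i <;> simp

end MBFAux
namespace MBFAux

theorem hasSecurity_comp {c m M : ℕ} (hc : 0 < c)
    (B : (Fin m → Bool) → Option (Fin M)) (q q' : ℕ) (β : ℝ)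
    (hq : ∀ n : ℕ, c * n ≤ q' → n ≤ q) (hsec : HasSecurity B q β) :
    HasSecurity (fun y : Fin (c * m) → Bool => B (blockParity c m y)) q' β := by
  obtain ⟨adv, hadv⟩ := hsec
  refine ⟨advC adv, ?_⟩
  intro t ht
  set h' := runAdv (advC adv) t [] with hh'
  have hI : Inv adv h' := Inv_runAdv hc adv t [] (Inv_nil hc adv)
  have hlen : h'.length ≤ q' := by
    have := runAdv_length (advC adv) t ([] : List (Fin (c * m) × Bool))
    simp only [List.length_nil, Nat.zero_add] at this
    exact le_trans this ht
  have hslen : (simH adv h').length ≤ q := hq _ (le_trans (sim_count hc adv h' hI) hlen)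
  set Tm := pathTree ((simH adv h').map Prod.fst) with hTm
  have hTd : Tm.depth ≤ q := by rw [hTm, pathTree_depth, List.length_map]; exact hslen
  obtain ⟨H, hH, hHk⟩ := hadv Tm hTd
  refine ⟨H, hH, ?_⟩
  intro k hk
  obtain ⟨y, hyc, hyk⟩ := hHk k hk
  have hrun : runAdv adv Tm [] = simH adv h' := (hI.run).symm
  rw [hrun] at hyc
  obtain ⟨y', hcons, hbp⟩ := lift_exists hc adv h' hI y hyc
  exact ⟨y', hcons, by simp only []; rw [hbp]; exact hyk⟩

end MBFAux

theorem mbf_block_composition' {m M T : ℕ} (hT : 0 < T) (δ : ℝ)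
    (hδ0 : 0 < δ) (hδ1 : δ < 1)
    (B : (Fin m → Bool) → Option (Fin M)) (hB : IsMBF B T δ)
    (c : ℕ) (hc : 1 ≤ c) :
    IsMBF (fun y : Fin (c * m) → Bool => B (blockParity c m y)) (c * T) δ := by
  obtain ⟨⟨tr, htr, htr_eval⟩, hdec, hsec⟩ := hB
  have hc0 : 0 < c := hc
  refine ⟨⟨MBFAux.expand c m tr, ?_, ?_⟩, ?_, ?_⟩
  · exact le_trans (MBFAux.expand_depth tr) (Nat.mul_le_mul_left c htr)
  · intro y; rw [MBFAux.expand_eval hc0, htr_eval]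
  · intro k
    obtain ⟨tk, htk, htk_eval⟩ := hdec k
    refine ⟨MBFAux.expand c m tk, ?_, ?_⟩
    · have h1 : ((MBFAux.expand c m tk).depth : ℝ) ≤ (c : ℝ) * (tk.depth : ℝ) := by
        exact_mod_cast MBFAux.expand_depth tk
      calc ((MBFAux.expand c m tk).depth : ℝ) ≤ (c : ℝ) * (tk.depth : ℝ) := h1
        _ ≤ (c : ℝ) * (δ * (T : ℝ)) := by
            apply mul_le_mul_of_nonneg_left htk (by positivity)
        _ = δ * ((c * T : ℕ) : ℝ) := by push_cast; ring
    · intro y; rw [MBFAux.expand_eval hc0, htk_eval]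
  · apply MBFAux.hasSecurity_comp hc0 B _ _ _ ?_ hsec
    intro n hn
    have hδ' : (0 : ℝ) ≤ 1 - δ := by linarith
    have hcpos : (0 : ℝ) < (c : ℝ) := by exact_mod_cast hc0
    have h1 : (c : ℝ) * (n : ℝ) ≤ (1 - δ) * ((c : ℝ) * (T : ℝ)) := by
      have h2 : (⌊(1 - δ) * ((c * T : ℕ) : ℝ)⌋₊ : ℝ) ≤ (1 - δ) * ((c * T : ℕ) : ℝ) :=
        Nat.floor_le (mul_nonneg hδ' (by positivity))
      have h3 : ((c * n : ℕ) : ℝ) ≤ (⌊(1 - δ) * ((c * T : ℕ) : ℝ)⌋₊ : ℝ) :=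
        Nat.cast_le.2 hn
      push_cast at h2 h3 ⊢
      linarith
    apply Nat.le_floor
    have h4 : (c : ℝ) * (n : ℝ) ≤ (c : ℝ) * ((1 - δ) * (T : ℝ)) := by linarith [h1]
    exact le_of_mul_le_mul_left h4 hcpos


/-- If `B` is a `(T, δ)`-mystery bin function on `{0,1}^m` with keyspace
`[M]`, then the bin function on `{0,1}^{cm}` obtained by replacing each input bit by
the parity of a block of `c` bits is a `(cT, δ)`-mystery bin function with the same
keyspace. -/
theorem mbf_block_composition {m M T : ℕ} (hT : 0 < T) (δ : ℝ)
    (hδ0 : 0 < δ) (hδ1 : δ < 1)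
    (B : (Fin m → Bool) → Option (Fin M)) (hB : IsMBF B T δ)
    (c : ℕ) (hc : 1 ≤ c) :
    IsMBF (fun y : Fin (c * m) → Bool => B (blockParity c m y)) (c * T) δ := by
  exact mbf_block_composition' hT δ hδ0 hδ1 B hB c hc
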